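/- Let x0, x1 ∈ ℝ and σ > 0, let P = N(x0, σ²) and Q = N(x1, σ²) with densities p = φ_{x0,σ} and q = φ_{x1,σ}, and set Δ = |x0 − x1|. Then the pushforward of P under the privacy loss function t ↦ log(p(t)/q(t)) equals the Gaussian measure N(Δ²/(2σ²), Δ²/σ²) on ℝ (interpreted as the Dirac measure at 0 when Δ = 0). That is, the privacy loss random variable of two equal-variance Gaussians is itself Gaussian with mean Δ²/(2σ²) and variance Δ²/σ². -/

import Mathlib

open MeasureTheory ProbabilityTheory Real

/-- The privacy loss random variable of two equal-variance Gaussians `N(x0, σ²)` and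
`N(x1, σ²)` is Gaussian with mean `Δ²/(2σ²)` and variance `Δ²/σ²`, where `Δ = |x0 − x1|`
(the Dirac measure at `0` when `Δ = 0`, via `gaussianReal` with zero variance). -/
theorem plrv_gaussian (x0 x1 σ : ℝ) (hσ : 0 < σ) :
    (gaussianReal x0 ⟨σ ^ 2, sq_nonneg σ⟩).map
        (fun t => log
          (((σ * Real.sqrt (2 * π))⁻¹ * exp (-(t - x0) ^ 2 / (2 * σ ^ 2))) /
           ((σ * Real.sqrt (2 * π))⁻¹ * exp (-(t - x1) ^ 2 / (2 * σ ^ 2)))))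
      = gaussianReal (|x0 - x1| ^ 2 / (2 * σ ^ 2))
          ⟨|x0 - x1| ^ 2 / σ ^ 2, by positivity⟩ := by
  set a : ℝ := (x0 - x1) / σ ^ 2 with ha
  set b : ℝ := (x1 ^ 2 - x0 ^ 2) / (2 * σ ^ 2) with hb
  have hσ2 : (σ:ℝ) ^ 2 ≠ 0 := by positivity
  have hc : (σ * Real.sqrt (2 * π))⁻¹ ≠ 0 := by
    have : (0:ℝ) < Real.sqrt (2 * π) := Real.sqrt_pos.mpr (by positivity)
    positivity
  have hfun : (fun t => log
          (((σ * Real.sqrt (2 * π))⁻¹ * exp (-(t - x0) ^ 2 / (2 * σ ^ 2))) /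
           ((σ * Real.sqrt (2 * π))⁻¹ * exp (-(t - x1) ^ 2 / (2 * σ ^ 2)))))
      = (fun t : ℝ => a * t + b) := by
    funext t
    rw [mul_div_mul_left _ _ hc, ← Real.exp_sub, Real.log_exp]
    rw [ha, hb]
    field_simp
    ring
  rw [hfun]
  have : (fun t : ℝ => a * t + b) = (fun s : ℝ => s + b) ∘ (fun t : ℝ => a * t) := rfl
  rw [this, ← Measure.map_map (measurable_id'.add_const b) (measurable_const_mul a)]
  erw [gaussianReal_map_const_mul, gaussianReal_map_add_const]
  congr 1
  · rw [ha, hb]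
    rw [sq_abs (x0 - x1)]
    field_simp
    ring
  · ext
    push_cast
    show ((x0 - x1) / σ ^ 2) ^ 2 * σ ^ 2 = |x0 - x1| ^ 2 / σ ^ 2
    rw [sq_abs (x0 - x1)]
    field_simp
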